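/- For the logistic map x_{k+1} = 3.71·x_k·(1−x_k) with initial value x₀ = 1/2ⁿ (n a positive natural number), there exists an integer k with 0 ≤ k ≤ 2n such that x_k > 1/2. -/
import Mathlib

theorem logistic_amplifies_in_2n_steps
    (n : ℕ) (hn : 1 ≤ n)
    (x : ℕ → ℝ) (hx0 : x 0 = 1 / 2 ^ n)
    (hrec : ∀ k : ℕ, x (k + 1) = 3.71 * x k * (1 - x k)) :
    ∃ k : ℕ, k ≤ 2 * n ∧ x k > 1 / 2 := by
  by_contra h
  push_neg at h
  have key : ∀ k, k ≤ 2 * n → (1.855 : ℝ) ^ k / 2 ^ n ≤ x k := by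
    intro k hk
    induction k with
    | zero => simp [hx0]
    | succ m ih =>
      have hm : m ≤ 2 * n := Nat.le_of_succ_le hk
      have ihm := ih hm
      have hxle := h m hm
      have hxpos : 0 < x m := lt_of_lt_of_le (by positivity) ihm
      rw [hrec]
      calc (1.855 : ℝ) ^ (m + 1) / 2 ^ n = 1.855 * ((1.855 : ℝ) ^ m / 2 ^ n) := by ring
        _ ≤ 1.855 * x m := by nlinarith
        _ = 3.71 * x m * (1 / 2) := by ring
        _ ≤ 3.71 * x m * (1 - x m) := by nlinarith
  have h1 := key (2 * n) le_rfl
  have h2 := h (2 * n) le_rfl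
  have h3 : (1 : ℝ) ≤ (1.855 : ℝ) ^ (2 * n) / 2 ^ n := by
    rw [pow_mul, ← div_pow]
    exact one_le_pow₀ (by norm_num)
  linarith
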